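/- Let ν, ω be positive definite matrices on a finite dimensional Hilbert space. Then for every s ∈ [0,1], D(ν,ω) = (1/2)(Tr ω + Tr ν − Tr|ω−ν|) ≤ Tr(ν^s ω^{1−s}). -/

import Mathlib

open scoped ComplexOrder

/-- Functional calculus for Hermitian matrices (junk value `0` off the Hermitian matrices). -/
noncomputable def cfcM {d : ℕ} (f : ℝ → ℝ) (A : Matrix (Fin d) (Fin d) ℂ) :
    Matrix (Fin d) (Fin d) ℂ :=
  if h : A.IsHermitian then
    (h.eigenvectorUnitary : Matrix (Fin d) (Fin d) ℂ) *
      Matrix.diagonal (fun i => (f (h.eigenvalues i) : ℂ)) *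
      (star (h.eigenvectorUnitary : Matrix (Fin d) (Fin d) ℂ))
  else 0

/-- Real power of a (positive) Hermitian matrix via functional calculus. -/
noncomputable def mpow {d : ℕ} (A : Matrix (Fin d) (Fin d) ℂ) (s : ℝ) :
    Matrix (Fin d) (Fin d) ℂ := cfcM (fun x => x ^ s) A

/-- Absolute value of a Hermitian matrix via functional calculus. -/
noncomputable def matAbs {d : ℕ} (A : Matrix (Fin d) (Fin d) ℂ) :
    Matrix (Fin d) (Fin d) ℂ := cfcM (fun x => |x|) A

namespace CfcAux

open Matrix

variable {d : ℕ} {A : Matrix (Fin d) (Fin d) ℂ}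

lemma cfcM_of (hA : A.IsHermitian) (f : ℝ → ℝ) :
    cfcM f A = (hA.eigenvectorUnitary : Matrix (Fin d) (Fin d) ℂ) *
      Matrix.diagonal (fun i => (f (hA.eigenvalues i) : ℂ)) *
      (star (hA.eigenvectorUnitary : Matrix (Fin d) (Fin d) ℂ)) := dif_pos hA

lemma star_mul_selfU (hA : A.IsHermitian) :
    star (hA.eigenvectorUnitary : Matrix (Fin d) (Fin d) ℂ) *
      (hA.eigenvectorUnitary : Matrix (Fin d) (Fin d) ℂ) = 1 :=
  Unitary.coe_star_mul_self hA.eigenvectorUnitary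

lemma mul_self_starU (hA : A.IsHermitian) :
    (hA.eigenvectorUnitary : Matrix (Fin d) (Fin d) ℂ) *
      star (hA.eigenvectorUnitary : Matrix (Fin d) (Fin d) ℂ) = 1 :=
  Unitary.coe_mul_star_self hA.eigenvectorUnitary

lemma cfcM_mul (hA : A.IsHermitian) (f g : ℝ → ℝ) :
    cfcM f A * cfcM g A = cfcM (fun x => f x * g x) A := by
  rw [cfcM_of hA f, cfcM_of hA g, cfcM_of hA]
  set U := (hA.eigenvectorUnitary : Matrix (Fin d) (Fin d) ℂ)
  have h1 : star U * U = 1 := star_mul_selfU hA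
  calc U * Matrix.diagonal (fun i => (f (hA.eigenvalues i) : ℂ)) * star U *
        (U * Matrix.diagonal (fun i => (g (hA.eigenvalues i) : ℂ)) * star U)
      = U * (Matrix.diagonal (fun i => (f (hA.eigenvalues i) : ℂ)) * ((star U * U) *
          Matrix.diagonal (fun i => (g (hA.eigenvalues i) : ℂ)))) * star U := by
        noncomm_ring
    _ = U * Matrix.diagonal (fun i => (f (hA.eigenvalues i) * g (hA.eigenvalues i) : ℂ)) *
          star U := by
        rw [h1, one_mul, diagonal_mul_diagonal, mul_assoc]
    _ = _ := by push_cast; rfl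

lemma cfcM_congr (hA : A.IsHermitian) {f g : ℝ → ℝ}
    (h : ∀ i, f (hA.eigenvalues i) = g (hA.eigenvalues i)) : cfcM f A = cfcM g A := by
  rw [cfcM_of hA f, cfcM_of hA g]
  have : (fun i => (f (hA.eigenvalues i) : ℂ)) = fun i => (g (hA.eigenvalues i) : ℂ) :=
    funext fun i => by rw [h i]
  rw [this]

lemma cfcM_one (hA : A.IsHermitian) : cfcM (fun _ => 1) A = 1 := by
  rw [cfcM_of hA]
  simp [Matrix.diagonal_one, mul_self_starU hA]

lemma cfcM_id (hA : A.IsHermitian) : cfcM (fun x => x) A = A := by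
  rw [cfcM_of hA]
  have h := hA.spectral_theorem
  rw [Unitary.conjStarAlgAut_apply] at h
  exact h.symm

lemma cfcM_sub (hA : A.IsHermitian) (f g : ℝ → ℝ) :
    cfcM f A - cfcM g A = cfcM (fun x => f x - g x) A := by
  rw [cfcM_of hA f, cfcM_of hA g, cfcM_of hA]
  rw [← Matrix.sub_mul, ← Matrix.mul_sub, Matrix.diagonal_sub]
  push_cast
  rfl

lemma cfcM_add (hA : A.IsHermitian) (f g : ℝ → ℝ) :
    cfcM f A + cfcM g A = cfcM (fun x => f x + g x) A := by
  rw [cfcM_of hA f, cfcM_of hA g, cfcM_of hA]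
  rw [← Matrix.add_mul, ← Matrix.mul_add, Matrix.diagonal_add]
  push_cast
  rfl

lemma cfcM_isHermitian (hA : A.IsHermitian) (f : ℝ → ℝ) : (cfcM f A).IsHermitian := by
  rw [cfcM_of hA f, Matrix.star_eq_conjTranspose]
  apply Matrix.isHermitian_mul_mul_conjTranspose
  have : (star fun i => (f (hA.eigenvalues i) : ℂ)) = fun i => (f (hA.eigenvalues i) : ℂ) := by
    funext i
    exact Complex.conj_ofReal _
  rw [Matrix.IsHermitian, Matrix.diagonal_conjTranspose, this]

lemma cfcM_trace (hA : A.IsHermitian) (f : ℝ → ℝ) :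
    (cfcM f A).trace = ∑ i, (f (hA.eigenvalues i) : ℂ) := by
  rw [cfcM_of hA f, Matrix.trace_mul_cycle, star_mul_selfU hA, one_mul,
    Matrix.trace_diagonal]

end CfcAux

namespace CfcAux
open Matrix
variable {d : ℕ} {A B : Matrix (Fin d) (Fin d) ℂ}

lemma cfcM_qf (hA : A.IsHermitian) (f : ℝ → ℝ) (z : Fin d → ℂ) :
    star z ⬝ᵥ (cfcM f A *ᵥ z) =
      ((∑ i, f (hA.eigenvalues i) * Complex.normSq
        ((star (hA.eigenvectorUnitary : Matrix (Fin d) (Fin d) ℂ) *ᵥ z) i) : ℝ) : ℂ) := by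
  rw [cfcM_of hA f]
  set U := (hA.eigenvectorUnitary : Matrix (Fin d) (Fin d) ℂ) with hU
  set y := star U *ᵥ z with hy
  have h1 : (U * Matrix.diagonal (fun i => (f (hA.eigenvalues i) : ℂ)) * star U) *ᵥ z
      = U *ᵥ (Matrix.diagonal (fun i => (f (hA.eigenvalues i) : ℂ)) *ᵥ y) := by
    rw [hy, mulVec_mulVec, mulVec_mulVec]
  rw [h1, dotProduct_mulVec]
  have h2 : star z ᵥ* U = star y := by
    rw [hy, star_mulVec, Matrix.star_eq_conjTranspose, conjTranspose_conjTranspose]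
  rw [h2, dotProduct]
  push_cast
  refine Finset.sum_congr rfl fun i _ => ?_
  rw [mulVec_diagonal, Pi.star_apply, Complex.star_def, ← Complex.mul_conj]
  ring

lemma cfcM_posSemidef (hA : A.IsHermitian) {f : ℝ → ℝ}
    (hf : ∀ i, 0 ≤ f (hA.eigenvalues i)) : (cfcM f A).PosSemidef := by
  refine posSemidef_iff_dotProduct_mulVec.mpr ⟨cfcM_isHermitian hA f, fun z => ?_⟩
  rw [cfcM_qf hA f z, Complex.zero_le_real]
  exact Finset.sum_nonneg fun i _ => mul_nonneg (hf i) (Complex.normSq_nonneg _)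

lemma cfcM_posDef (hA : A.IsHermitian) {f : ℝ → ℝ}
    (hf : ∀ i, 0 < f (hA.eigenvalues i)) : (cfcM f A).PosDef := by
  refine posDef_iff_dotProduct_mulVec.mpr ⟨cfcM_isHermitian hA f, fun z hz => ?_⟩
  rw [cfcM_qf hA f z, Complex.zero_lt_real]
  have hy : star (hA.eigenvectorUnitary : Matrix (Fin d) (Fin d) ℂ) *ᵥ z ≠ 0 := by
    intro h0
    apply hz
    have h3 : (hA.eigenvectorUnitary : Matrix (Fin d) (Fin d) ℂ) *ᵥ
        (star (hA.eigenvectorUnitary : Matrix (Fin d) (Fin d) ℂ) *ᵥ z) = z := by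
      rw [mulVec_mulVec, mul_self_starU hA, one_mulVec]
    rw [h0, mulVec_zero] at h3
    exact h3.symm
  obtain ⟨i, hi⟩ := Function.ne_iff.mp hy
  exact Finset.sum_pos'
    (fun j _ => mul_nonneg (hf j).le (Complex.normSq_nonneg _))
    ⟨i, Finset.mem_univ i, mul_pos (hf i) (by simpa using Complex.normSq_pos.mpr hi)⟩

lemma posSemidef_diag_re_nonneg (hM : A.PosSemidef) (i : Fin d) : 0 ≤ (A i i).re := by
  have h := (posSemidef_iff_dotProduct_mulVec.mp hM).2 (Pi.single i 1)
  have hq : star (Pi.single i 1 : Fin d → ℂ) ⬝ᵥ (A *ᵥ Pi.single i 1) = A i i := by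
    simp [dotProduct, Matrix.mulVec_single, Pi.single_apply, apply_ite]
  rw [hq] at h
  exact (Complex.le_def.mp h).1

lemma posSemidef_trace_re_nonneg (hM : A.PosSemidef) : 0 ≤ A.trace.re := by
  rw [Matrix.trace, Complex.re_sum]
  exact Finset.sum_nonneg fun i _ => posSemidef_diag_re_nonneg hM i

lemma trace_mul_re_nonneg (hA : A.PosSemidef) (hB : B.PosSemidef) :
    0 ≤ ((A * B).trace).re := by
  open scoped MatrixOrder in
  obtain ⟨M, hM⟩ := CStarAlgebra.nonneg_iff_eq_star_mul_self.mp hB.nonneg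
  rw [hM, ← Matrix.mul_assoc, Matrix.trace_mul_comm, ← Matrix.mul_assoc]
  exact posSemidef_trace_re_nonneg (hA.mul_mul_conjTranspose_same M)

end CfcAux

namespace CfcAux
open Matrix
variable {d : ℕ}

lemma dot_herm_left {M : Matrix (Fin d) (Fin d) ℂ} (hM : M.IsHermitian) (v w : Fin d → ℂ) :
    star (M *ᵥ v) ⬝ᵥ w = star v ⬝ᵥ (M *ᵥ w) := by
  rw [star_mulVec, ← dotProduct_mulVec, hM.eq]

lemma inv_anti {P Q P' Q' : Matrix (Fin d) (Fin d) ℂ}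
    (hP : P.PosSemidef) (hQ : Q.IsHermitian) (hPQ : (Q - P).PosSemidef)
    (hP'h : P'.IsHermitian) (hP'P : P' * P = 1) (hPP' : P * P' = 1)
    (hQQ' : Q * Q' = 1) (z : Fin d → ℂ) :
    star z ⬝ᵥ (Q' *ᵥ z) ≤ star z ⬝ᵥ (P' *ᵥ z) := by
  set w := Q' *ᵥ z with hw
  have hzw : Q *ᵥ w = z := by rw [hw, mulVec_mulVec, hQQ', one_mulVec]
  have hE := (posSemidef_iff_dotProduct_mulVec.mp hP).2 (w - P' *ᵥ z)
  have e1 : P *ᵥ (w - P' *ᵥ z) = P *ᵥ w - z := by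
    have h' : P *ᵥ (P' *ᵥ z) = z := by rw [mulVec_mulVec, hPP', one_mulVec]
    rw [Matrix.mulVec_sub, h']
  have e2 : star (w - P' *ᵥ z) = star w - star (P' *ᵥ z) := star_sub _ _
  rw [e1, e2, sub_dotProduct, dotProduct_sub, dotProduct_sub] at hE
  have e3 : star (P' *ᵥ z) ⬝ᵥ (P *ᵥ w) = star z ⬝ᵥ w := by
    rw [dot_herm_left hP'h, mulVec_mulVec, hP'P, one_mulVec]
  have e4 : star (P' *ᵥ z) ⬝ᵥ z = star z ⬝ᵥ (P' *ᵥ z) := dot_herm_left hP'h z z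
  have e5 : star w ⬝ᵥ z = star w ⬝ᵥ (Q *ᵥ w) := by rw [hzw]
  have e6 : star z ⬝ᵥ w = star w ⬝ᵥ (Q *ᵥ w) := by
    conv_lhs => rw [← hzw]
    rw [dot_herm_left hQ]
  rw [e3, e4, e5, e6] at hE
  have hW := (posSemidef_iff_dotProduct_mulVec.mp hPQ).2 w
  rw [Matrix.sub_mulVec, dotProduct_sub] at hW
  have h0 := add_nonneg hE hW
  rw [← sub_nonneg, e6]
  calc (0 : ℂ) ≤ _ := h0
    _ = star z ⬝ᵥ (P' *ᵥ z) - star w ⬝ᵥ (Q *ᵥ w) := by ring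

end CfcAux

namespace CfcAux
open MeasureTheory Set Real

lemma contOn_aux (r x : ℝ) (hx : 0 < x) :
    ContinuousOn (fun t : ℝ => t ^ (r - 1) * (x / (x + t))) (Ioi 0) := by
  refine ContinuousOn.mul ?_ ?_
  · intro t ht
    exact (Real.continuousAt_rpow_const t (r - 1)
      (Or.inl (ne_of_gt ht))).continuousWithinAt
  · refine ContinuousOn.div continuousOn_const
      ((continuous_const.add continuous_id).continuousOn) ?_
    intro t ht
    have : (0:ℝ) < t := ht
    positivity

lemma integrableOn_aux {r x : ℝ} (hr0 : 0 < r) (hr1 : r < 1) (hx : 0 < x) :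
    IntegrableOn (fun t : ℝ => t ^ (r - 1) * (x / (x + t))) (Ioi 0) := by
  rw [← Set.Ioc_union_Ioi_eq_Ioi (zero_le_one : (0:ℝ) ≤ 1)]
  refine IntegrableOn.union ?_ ?_
  · have hbase : IntegrableOn (fun t : ℝ => t ^ (r - 1)) (Ioc 0 1) := by
      have h := intervalIntegral.intervalIntegrable_rpow' (a := 0) (b := 1)
        (by linarith : (-1:ℝ) < r - 1)
      rwa [intervalIntegrable_iff_integrableOn_Ioc_of_le zero_le_one] at h
    refine Integrable.mono' hbase (((contOn_aux r x hx).mono Ioc_subset_Ioi_self).aestronglyMeasurable measurableSet_Ioc) ?_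
    filter_upwards [ae_restrict_mem measurableSet_Ioc] with t ht
    have ht0 : 0 < t := ht.1
    have h1 : x / (x + t) ≤ 1 := by
      rw [div_le_one (by linarith)]; linarith
    have h2 : 0 ≤ x / (x + t) := le_of_lt (div_pos hx (by linarith))
    have hnn : 0 ≤ t ^ (r - 1) := rpow_nonneg ht0.le _
    rw [Real.norm_eq_abs, abs_of_nonneg (mul_nonneg hnn h2)]
    calc t ^ (r - 1) * (x / (x + t)) ≤ t ^ (r - 1) * 1 := by
          exact mul_le_mul_of_nonneg_left h1 hnn
      _ = t ^ (r - 1) := mul_one _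
  · have hbase : IntegrableOn (fun t : ℝ => x * t ^ (r - 2)) (Ioi 1) := by
      exact (integrableOn_Ioi_rpow_of_lt (by linarith) one_pos).const_mul x
    refine Integrable.mono' hbase (((contOn_aux r x hx).mono (Ioi_subset_Ioi zero_le_one)).aestronglyMeasurable measurableSet_Ioi) ?_
    filter_upwards [ae_restrict_mem measurableSet_Ioi] with t ht
    have ht1 : (1:ℝ) < t := ht
    have ht0 : 0 < t := by linarith
    have h2 : 0 ≤ x / (x + t) := le_of_lt (div_pos hx (by linarith))
    have hnn : 0 ≤ t ^ (r - 1) := rpow_nonneg ht0.le _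
    rw [Real.norm_eq_abs, abs_of_nonneg (mul_nonneg hnn h2)]
    have hdiv : x / (x + t) ≤ x / t :=
      div_le_div_of_nonneg_left hx.le ht0 (by linarith)
    calc t ^ (r - 1) * (x / (x + t)) ≤ t ^ (r - 1) * (x / t) :=
          mul_le_mul_of_nonneg_left hdiv hnn
      _ = x * t ^ (r - 2) := by
          have hcomb : t ^ (r - 1) * t ^ (-1:ℝ) = t ^ (r - 2) := by
            rw [← Real.rpow_add ht0]
            ring_nf
          rw [div_eq_mul_inv, show (t⁻¹ : ℝ) = t ^ (-1:ℝ) by rw [Real.rpow_neg_one]]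
          calc t ^ (r - 1) * (x * t ^ (-1:ℝ))
              = t ^ (r - 1) * t ^ (-1:ℝ) * x := by ring
            _ = t ^ (r - 2) * x := by rw [hcomb]
            _ = x * t ^ (r - 2) := mul_comm _ _

lemma integral_eq_rpow {r x : ℝ} (hr0 : 0 < r) (hr1 : r < 1) (hx : 0 < x) :
    ∫ t in Ioi (0:ℝ), t ^ (r - 1) * (x / (x + t)) =
      x ^ r * ∫ t in Ioi (0:ℝ), t ^ (r - 1) * (1 / (1 + t)) := by
  have h := MeasureTheory.integral_comp_mul_left_Ioi
    (fun t : ℝ => t ^ (r - 1) * (x / (x + t))) 0 hx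
  rw [mul_zero] at h
  have h2 : (∫ u in Ioi (0:ℝ), (fun t : ℝ => t ^ (r - 1) * (x / (x + t))) (x * u))
      = ∫ u in Ioi (0:ℝ), x ^ (r - 1) * (u ^ (r - 1) * (1 / (1 + u))) := by
    refine setIntegral_congr_fun measurableSet_Ioi fun u hu => ?_
    have hu0 : (0:ℝ) < u := hu
    have h1u : (0:ℝ) < 1 + u := by linarith
    simp only
    rw [Real.mul_rpow hx.le hu0.le, show x + x * u = x * (1 + u) by ring]
    rw [show x / (x * (1 + u)) = 1 / (1 + u) by
      rw [div_mul_eq_div_div, div_self hx.ne']]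
    ring
  rw [h2, MeasureTheory.integral_const_mul, smul_eq_mul] at h
  have hxr : x * x ^ (r - 1) = x ^ r := by
    have h3 := Real.rpow_add hx 1 (r - 1)
    rw [Real.rpow_one] at h3
    rw [← h3]
    norm_num
  have hI : (∫ t in Ioi (0:ℝ), t ^ (r - 1) * (x / (x + t)))
      = x * (x ^ (r - 1) * ∫ t in Ioi (0:ℝ), t ^ (r - 1) * (1 / (1 + t))) := by
    rw [h]
    rw [← mul_assoc, mul_inv_cancel₀ hx.ne', one_mul]
  rw [hI, ← mul_assoc, hxr]

lemma c_pos {r : ℝ} (hr0 : 0 < r) (hr1 : r < 1) :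
    0 < ∫ t in Ioi (0:ℝ), t ^ (r - 1) * (1 / (1 + t)) := by
  have hint : IntegrableOn (fun t : ℝ => t ^ (r - 1) * ((1:ℝ) / (1 + t))) (Ioi 0) :=
    integrableOn_aux hr0 hr1 one_pos
  rw [setIntegral_pos_iff_support_of_nonneg_ae ?hnn hint]
  case hnn =>
    filter_upwards [ae_restrict_mem measurableSet_Ioi] with t ht
    have ht0 : (0:ℝ) < t := ht
    positivity
  have hsub : Ioi (0:ℝ) ⊆ Function.support (fun t : ℝ => t ^ (r - 1) * (1 / (1 + t))) := by
    intro t ht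
    have ht0 : (0:ℝ) < t := ht
    have hpos : 0 < t ^ (r - 1) * (1 / (1 + t)) := by positivity
    exact hpos.ne'
  calc (0:ENNReal) < volume (Ioi (0:ℝ)) := by simp [Real.volume_Ioi]
    _ ≤ volume (Function.support (fun t : ℝ => t ^ (r - 1) * (1 / (1 + t))) ∩ Ioi 0) :=
        measure_mono fun t ht => ⟨hsub ht, ht⟩

end CfcAux

namespace CfcAux
open MeasureTheory Set Real Matrix

noncomputable def betaC (r : ℝ) : ℝ := ∫ t in Ioi (0:ℝ), t ^ (r - 1) * (1 / (1 + t))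

lemma integral_term {r x : ℝ} (hr0 : 0 < r) (hr1 : r < 1) (hx : 0 < x) (w : ℝ) :
    ∫ t in Ioi (0:ℝ), t ^ (r - 1) * (x / (x + t)) * w = x ^ r * w * betaC r := by
  rw [MeasureTheory.integral_mul_const, integral_eq_rpow hr0 hr1 hx, betaC]
  ring

lemma key_sum {n : ℕ} {r : ℝ} (hr0 : 0 < r) (hr1 : r < 1)
    (lam w : Fin n → ℝ) (hlam : ∀ i, 0 < lam i) :
    (∑ i, lam i ^ r * w i) * betaC r =
      ∫ t in Ioi (0:ℝ), t ^ (r - 1) * ∑ i, lam i / (lam i + t) * w i := by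
  have hfun : (fun t : ℝ => t ^ (r - 1) * ∑ i, lam i / (lam i + t) * w i)
      = fun t : ℝ => ∑ i, t ^ (r - 1) * (lam i / (lam i + t)) * w i := by
    funext t
    rw [Finset.mul_sum]
    exact Finset.sum_congr rfl fun i _ => by ring
  rw [hfun, MeasureTheory.integral_finset_sum _
    (fun i _ => ((integrableOn_aux hr0 hr1 (hlam i)).mul_const (w i)))]
  rw [Finset.sum_mul]
  refine (Finset.sum_congr rfl fun i _ => ?_).symm
  rw [integral_term hr0 hr1 (hlam i) (w i)]

lemma integrable_sum_aux {n : ℕ} {r : ℝ} (hr0 : 0 < r) (hr1 : r < 1)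
    (lam w : Fin n → ℝ) (hlam : ∀ i, 0 < lam i) :
    IntegrableOn (fun t : ℝ => ∑ i, t ^ (r - 1) * (lam i / (lam i + t)) * w i) (Ioi 0) :=
  MeasureTheory.integrable_finset_sum _
    (fun i _ => ((integrableOn_aux hr0 hr1 (hlam i)).mul_const (w i)))

end CfcAux

namespace CfcAux
open MeasureTheory Set Real Matrix
variable {d : ℕ} {A B : Matrix (Fin d) (Fin d) ℂ}

lemma cfcM_const (hA : A.IsHermitian) (c : ℝ) : cfcM (fun _ => c) A = (c : ℂ) • 1 := by
  rw [cfcM_of hA]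
  have hdiag : Matrix.diagonal (fun _ : Fin d => (c:ℂ)) = (c:ℂ) • (1 : Matrix (Fin d) (Fin d) ℂ) := by
    ext i j
    by_cases h : i = j <;>
      simp [Matrix.diagonal_apply, Matrix.one_apply, h]
  rw [hdiag, Matrix.mul_smul, Matrix.mul_one, Matrix.smul_mul, mul_self_starU hA]

lemma cfcM_add_const (hA : A.IsHermitian) (c : ℝ) :
    cfcM (fun x => x + c) A = A + (c : ℂ) • 1 := by
  have h := cfcM_add hA (fun x => x) (fun _ => c)
  rw [cfcM_id hA, cfcM_const hA] at h
  exact h.symm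

lemma integrable_sum_aux' {n : ℕ} {r : ℝ} (hr0 : 0 < r) (hr1 : r < 1)
    (lam w : Fin n → ℝ) (hlam : ∀ i, 0 < lam i) :
    IntegrableOn (fun t : ℝ => t ^ (r - 1) * ∑ i, lam i / (lam i + t) * w i) (Ioi 0) := by
  have hfun : (fun t : ℝ => t ^ (r - 1) * ∑ i, lam i / (lam i + t) * w i)
      = fun t : ℝ => ∑ i, t ^ (r - 1) * (lam i / (lam i + t)) * w i := by
    funext t
    rw [Finset.mul_sum]
    exact Finset.sum_congr rfl fun i _ => by ring
  rw [hfun]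
  exact MeasureTheory.integrable_finset_sum _
    (fun i _ => ((integrableOn_aux hr0 hr1 (hlam i)).mul_const (w i)))

lemma scalar_LH {n m : ℕ} {r : ℝ} (hr0 : 0 < r) (hr1 : r < 1)
    (lamA wA : Fin n → ℝ) (lamB wB : Fin m → ℝ)
    (hlamA : ∀ i, 0 < lamA i) (hlamB : ∀ i, 0 < lamB i)
    (hW : ∑ i, wA i = ∑ i, wB i)
    (hres : ∀ t : ℝ, 0 < t →
      ∑ i, (lamB i + t)⁻¹ * wB i ≤ ∑ i, (lamA i + t)⁻¹ * wA i) :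
    ∑ i, lamA i ^ r * wA i ≤ ∑ i, lamB i ^ r * wB i := by
  have hc := c_pos hr0 hr1
  have hkA := key_sum hr0 hr1 lamA wA hlamA
  have hkB := key_sum hr0 hr1 lamB wB hlamB
  have hpt : ∀ t ∈ Ioi (0:ℝ),
      t ^ (r - 1) * ∑ i, lamA i / (lamA i + t) * wA i
        ≤ t ^ (r - 1) * ∑ i, lamB i / (lamB i + t) * wB i := by
    intro t ht
    have ht0 : (0:ℝ) < t := ht
    refine mul_le_mul_of_nonneg_left ?_ (rpow_nonneg ht0.le _)
    have eA : ∑ i, lamA i / (lamA i + t) * wA i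
        = (∑ i, wA i) - t * ∑ i, (lamA i + t)⁻¹ * wA i := by
      rw [Finset.mul_sum, ← Finset.sum_sub_distrib]
      refine Finset.sum_congr rfl fun i _ => ?_
      have h := hlamA i
      have hne : lamA i + t ≠ 0 := by positivity
      field_simp
      ring
    have eB : ∑ i, lamB i / (lamB i + t) * wB i
        = (∑ i, wB i) - t * ∑ i, (lamB i + t)⁻¹ * wB i := by
      rw [Finset.mul_sum, ← Finset.sum_sub_distrib]
      refine Finset.sum_congr rfl fun i _ => ?_
      have h := hlamB i
      have hne : lamB i + t ≠ 0 := by positivity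
      field_simp
      ring
    rw [eA, eB, hW]
    have h := hres t ht0
    nlinarith [h, ht0]
  have hmono := MeasureTheory.setIntegral_mono_on
    (integrable_sum_aux' hr0 hr1 lamA wA hlamA)
    (integrable_sum_aux' hr0 hr1 lamB wB hlamB)
    measurableSet_Ioi hpt
  rw [← hkA, ← hkB] at hmono
  exact le_of_mul_le_mul_right hmono hc

lemma loewner_heinz (hA : A.PosDef) (hB : B.PosDef)
    (hAB : (B - A).PosSemidef) {r : ℝ} (hr0 : 0 ≤ r) (hr1 : r ≤ 1) :
    (mpow B r - mpow A r).PosSemidef := by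
  have hAh := hA.1
  have hBh := hB.1
  have hlamA : ∀ i, 0 < hAh.eigenvalues i := hA.eigenvalues_pos
  have hlamB : ∀ i, 0 < hBh.eigenvalues i := hB.eigenvalues_pos
  rcases eq_or_lt_of_le hr0 with h0 | h0
  · have e1 : mpow A r = 1 := by
      rw [mpow, cfcM_congr hAh (g := fun _ => 1)
        (fun i => by rw [← h0, Real.rpow_zero]), cfcM_one hAh]
    have e2 : mpow B r = 1 := by
      rw [mpow, cfcM_congr hBh (g := fun _ => 1)
        (fun i => by rw [← h0, Real.rpow_zero]), cfcM_one hBh]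
    rw [e1, e2, sub_self]
    exact Matrix.PosSemidef.zero
  rcases eq_or_lt_of_le hr1 with h1 | h1
  · have e1 : mpow A r = A := by
      rw [mpow, cfcM_congr hAh (g := fun x => x)
        (fun i => by rw [h1, Real.rpow_one]), cfcM_id hAh]
    have e2 : mpow B r = B := by
      rw [mpow, cfcM_congr hBh (g := fun x => x)
        (fun i => by rw [h1, Real.rpow_one]), cfcM_id hBh]
    rw [e1, e2]
    exact hAB
  refine posSemidef_iff_dotProduct_mulVec.mpr ⟨(cfcM_isHermitian hBh _).sub (cfcM_isHermitian hAh _), fun z => ?_⟩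
  rw [Matrix.sub_mulVec, dotProduct_sub, mpow, mpow,
    cfcM_qf hBh _ z, cfcM_qf hAh _ z, ← Complex.ofReal_sub]
  rw [Complex.zero_le_real, sub_nonneg]
  have hW : ∑ i, Complex.normSq
        ((star (hAh.eigenvectorUnitary : Matrix (Fin d) (Fin d) ℂ) *ᵥ z) i)
      = ∑ i, Complex.normSq
        ((star (hBh.eigenvectorUnitary : Matrix (Fin d) (Fin d) ℂ) *ᵥ z) i) := by
    have h1' := cfcM_qf hAh (fun _ => 1) z
    have h2' := cfcM_qf hBh (fun _ => 1) z
    rw [cfcM_one hAh] at h1'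
    rw [cfcM_one hBh] at h2'
    have h3 := Complex.ofReal_inj.mp (h1'.symm.trans h2')
    simpa using h3
  have hres : ∀ t : ℝ, 0 < t →
      ∑ i, (hBh.eigenvalues i + t)⁻¹ * Complex.normSq
        ((star (hBh.eigenvectorUnitary : Matrix (Fin d) (Fin d) ℂ) *ᵥ z) i)
      ≤ ∑ i, (hAh.eigenvalues i + t)⁻¹ * Complex.normSq
        ((star (hAh.eigenvectorUnitary : Matrix (Fin d) (Fin d) ℂ) *ᵥ z) i) := by
    intro t ht
    have hP : (cfcM (fun x => x + t) A).PosSemidef :=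
      (cfcM_posDef hAh (f := fun x => x + t)
        (fun i => by have := hlamA i; positivity)).posSemidef
    have hQh : (cfcM (fun x => x + t) B).IsHermitian := cfcM_isHermitian hBh _
    have hPQ : (cfcM (fun x => x + t) B - cfcM (fun x => x + t) A).PosSemidef := by
      rw [cfcM_add_const hAh, cfcM_add_const hBh,
        show B + (t:ℂ) • 1 - (A + (t:ℂ) • 1) = B - A by abel]
      exact hAB
    have hP'h : (cfcM (fun x => (x + t)⁻¹) A).IsHermitian := cfcM_isHermitian hAh _
    have hP'P : cfcM (fun x => (x + t)⁻¹) A * cfcM (fun x => x + t) A = 1 := by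
      rw [cfcM_mul hAh, cfcM_congr hAh (g := fun _ => 1)
        (fun i => by have := hlamA i; field_simp), cfcM_one hAh]
    have hPP' : cfcM (fun x => x + t) A * cfcM (fun x => (x + t)⁻¹) A = 1 := by
      rw [cfcM_mul hAh, cfcM_congr hAh (g := fun _ => 1)
        (fun i => by have := hlamA i; field_simp), cfcM_one hAh]
    have hQQ' : cfcM (fun x => x + t) B * cfcM (fun x => (x + t)⁻¹) B = 1 := by
      rw [cfcM_mul hBh, cfcM_congr hBh (g := fun _ => 1)
        (fun i => by have := hlamB i; field_simp), cfcM_one hBh]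
    have h := inv_anti hP hQh hPQ hP'h hP'P hPP' hQQ' z
    rw [cfcM_qf hAh _ z, cfcM_qf hBh _ z] at h
    exact_mod_cast h
  exact scalar_LH h0 h1 _ _ _ _ hlamA hlamB hW hres

end CfcAux

namespace CfcAux
open Matrix
variable {d : ℕ} {M : Matrix (Fin d) (Fin d) ℂ}

lemma mpow_mul_mpow (hM : M.PosDef) (s t : ℝ) : mpow M s * mpow M t = mpow M (s + t) := by
  rw [mpow, mpow, mpow, cfcM_mul hM.1]
  exact cfcM_congr hM.1 fun i => (Real.rpow_add (hM.eigenvalues_pos i) s t).symm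

lemma mpow_one' (hM : M.PosDef) : mpow M 1 = M := by
  rw [mpow, cfcM_congr hM.1 (g := fun x => x) (fun i => Real.rpow_one _), cfcM_id hM.1]

lemma mpow_posSemidef (hM : M.PosDef) (s : ℝ) : (mpow M s).PosSemidef :=
  (cfcM_posDef hM.1 (fun i => Real.rpow_pos_of_pos (hM.eigenvalues_pos i) s)).posSemidef

end CfcAux


open CfcAux Matrix

/-- Upper bound on the minimal error probability:
`D(ν,ω) = (1/2)(Tr ω + Tr ν − Tr|ω−ν|) ≤ Tr(ν^s ω^{1−s})` for `s ∈ [0,1]`. -/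
theorem minimal_error_le_renyi {d : ℕ}
    (ν ω : Matrix (Fin d) (Fin d) ℂ) (hν : ν.PosDef) (hω : ω.PosDef)
    (s : ℝ) (hs : s ∈ Set.Icc (0 : ℝ) 1) :
    (1 / 2 : ℝ) * ((ω.trace).re + (ν.trace).re - ((matAbs (ω - ν)).trace).re)
      ≤ ((mpow ν s * mpow ω (1 - s)).trace).re := by

  obtain ⟨hs0, hs1⟩ := hs
  have ht0 : (0:ℝ) ≤ 1 - s := by linarith
  have ht1 : (1:ℝ) - s ≤ 1 := by linarith
  have hX : (ω - ν).IsHermitian := hω.1.sub hν.1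
  set X := ω - ν with hXdef
  set Xp := cfcM (fun x => max x 0) X with hXp'
  set Xm := cfcM (fun x => max (-x) 0) X with hXm'
  have hXpPSD : Xp.PosSemidef := cfcM_posSemidef hX (fun i => le_max_right _ _)
  have hsub : Xp - Xm = X := by
    rw [hXp', hXm', cfcM_sub hX,
      cfcM_congr hX (g := fun x => x) (fun i => by
        rcases le_total 0 (hX.eigenvalues i) with h | h
        · rw [max_eq_left h, max_eq_right (by linarith : -(hX.eigenvalues i) ≤ 0)]; ring
        · rw [max_eq_right h, max_eq_left (by linarith : 0 ≤ -(hX.eigenvalues i))]; ring),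
      cfcM_id hX]
  have habs : Xp + Xm = matAbs X := by
    rw [hXp', hXm', cfcM_add hX, matAbs]
    exact cfcM_congr hX fun i => by
      rcases le_total 0 (hX.eigenvalues i) with h | h
      · rw [max_eq_left h, max_eq_right (by linarith : -(hX.eigenvalues i) ≤ 0),
          abs_of_nonneg h]; ring
      · rw [max_eq_right h, max_eq_left (by linarith : 0 ≤ -(hX.eigenvalues i)),
          abs_of_nonpos h]; ring
  set C := ν + Xp with hCdef
  have hC : C.PosDef := hν.add_posSemidef hXpPSD
  have hCν : (C - ν).PosSemidef := by
    rw [hCdef, add_sub_cancel_left]; exact hXpPSD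
  have hCω : (C - ω).PosSemidef := by
    have : C - ω = Xm := by
      rw [hCdef, show ν + Xp - ω = Xp - (ω - ν) by abel, ← hXdef, ← hsub]; abel
    rw [this]
    exact cfcM_posSemidef hX (fun i => le_max_right _ _)
  -- Löwner–Heinz consequences
  have lhs1 : (mpow C s - mpow ν s).PosSemidef := loewner_heinz hν hC hCν hs0 hs1
  have lhs2 : (mpow C (1-s) - mpow ν (1-s)).PosSemidef := loewner_heinz hν hC hCν ht0 ht1
  have lhs3 : (mpow C (1-s) - mpow ω (1-s)).PosSemidef := loewner_heinz hω hC hCω ht0 ht1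
  have lhs4 : (mpow C s - mpow ω s).PosSemidef := loewner_heinz hω hC hCω hs0 hs1
  have h1 : 0 ≤ (((mpow C s - mpow ν s) * (mpow C (1-s) - mpow ω (1-s))).trace).re :=
    trace_mul_re_nonneg lhs1 lhs3
  have h2 : 0 ≤ ((mpow ν s * (mpow C (1-s) - mpow ν (1-s))).trace).re :=
    trace_mul_re_nonneg (mpow_posSemidef hν s) lhs2
  have h3 : 0 ≤ (((mpow C s - mpow ω s) * mpow ω (1-s)).trace).re :=
    trace_mul_re_nonneg lhs4 (mpow_posSemidef hω (1-s))
  have iCC : mpow C s * mpow C (1-s) = C := by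
    rw [mpow_mul_mpow hC, show s + (1 - s) = 1 by ring, mpow_one' hC]
  have iνν : mpow ν s * mpow ν (1-s) = ν := by
    rw [mpow_mul_mpow hν, show s + (1 - s) = 1 by ring, mpow_one' hν]
  have iωω : mpow ω s * mpow ω (1-s) = ω := by
    rw [mpow_mul_mpow hω, show s + (1 - s) = 1 by ring, mpow_one' hω]
  have expand1 : (((mpow C s - mpow ν s) * (mpow C (1-s) - mpow ω (1-s))).trace).re
      = (C.trace).re - ((mpow C s * mpow ω (1-s)).trace).re
        - ((mpow ν s * mpow C (1-s)).trace).re + ((mpow ν s * mpow ω (1-s)).trace).re := by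
    rw [Matrix.sub_mul, Matrix.mul_sub, Matrix.mul_sub, Matrix.trace_sub, Matrix.trace_sub,
      Matrix.trace_sub, iCC]
    simp [Complex.sub_re]
    ring
  have expand2 : ((mpow ν s * (mpow C (1-s) - mpow ν (1-s))).trace).re
      = ((mpow ν s * mpow C (1-s)).trace).re - (ν.trace).re := by
    rw [Matrix.mul_sub, Matrix.trace_sub, iνν, Complex.sub_re]
  have expand3 : (((mpow C s - mpow ω s) * mpow ω (1-s)).trace).re
      = ((mpow C s * mpow ω (1-s)).trace).re - (ω.trace).re := by
    rw [Matrix.sub_mul, Matrix.trace_sub, iωω, Complex.sub_re]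
  have hTrC : (C.trace).re = (ν.trace).re + (Xp.trace).re := by
    rw [hCdef, Matrix.trace_add, Complex.add_re]
  have hTrX : (ω.trace).re - (ν.trace).re = (Xp.trace).re - (Xm.trace).re := by
    have := congrArg (fun M : Matrix (Fin d) (Fin d) ℂ => (M.trace).re) hsub
    simp only [Matrix.trace_sub, Complex.sub_re] at this
    rw [this, hXdef, Matrix.trace_sub, Complex.sub_re]
  have hTrAbs : ((matAbs X).trace).re = (Xp.trace).re + (Xm.trace).re := by
    rw [← habs, Matrix.trace_add, Complex.add_re]
  rw [expand1] at h1
  rw [expand2] at h2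
  rw [expand3] at h3
  linarith
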